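/- Let φ(r)=r·log r for r>0 and φ(0)=0. Then for all reals a,b≥0 with a+b>0, (φ(a)+φ(b))/2 − φ((a+b)/2) ≥ (1/4)·(a−b)²/(a+b). -/

import Mathlib

/-- `φ(r) = r·log r`, with `φ(0) = 0` (automatic since `Real.log 0 = 0`). -/
noncomputable def phiEnt (r : ℝ) : ℝ := r * Real.log r

private lemma key1 : ∀ t : ℝ, 1 ≤ t → 2 * (t - 1) ≤ (t + 1) * Real.log t := by
  intro t ht
  set f : ℝ → ℝ := fun x => (x + 1) * Real.log x - 2 * (x - 1) with hf
  have hderiv : ∀ x : ℝ, 0 < x →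
      HasDerivAt f (Real.log x + (x + 1) * x⁻¹ - 2) x := by
    intro x hx
    have h1 : HasDerivAt (fun y : ℝ => (y + 1) * Real.log y)
        (1 * Real.log x + (x + 1) * x⁻¹) x :=
      ((hasDerivAt_id x).add_const 1).mul (Real.hasDerivAt_log hx.ne')
    have h2 : HasDerivAt (fun y : ℝ => 2 * (y - 1)) (2 * 1) x :=
      ((hasDerivAt_id x).sub_const 1).const_mul 2
    have := h1.fun_sub h2
    exact this.congr_deriv (by ring)
  have hmono : MonotoneOn f (Set.Ici 1) := by
    apply monotoneOn_of_deriv_nonneg (convex_Ici 1)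
    · intro x hx
      have hx0 : (0:ℝ) < x := lt_of_lt_of_le one_pos hx
      exact (hderiv x hx0).continuousAt.continuousWithinAt
    · intro x hx
      rw [interior_Ici] at hx
      exact (hderiv x (lt_trans one_pos hx)).differentiableAt.differentiableWithinAt
    · intro x hx
      rw [interior_Ici] at hx
      have hx0 : (0:ℝ) < x := lt_trans one_pos hx
      rw [(hderiv x hx0).deriv]
      have hlog : 1 - 1/x ≤ Real.log x := by
        have := Real.log_le_sub_one_of_pos (show (0:ℝ) < 1/x by positivity)
        rw [Real.log_div one_ne_zero hx0.ne', Real.log_one] at this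
        linarith
      have : (x + 1) * x⁻¹ = 1 + 1/x := by field_simp
      rw [this]
      linarith
  have h0 : f 1 = 0 := by simp [hf]
  have := hmono (Set.mem_Ici.mpr le_rfl) (Set.mem_Ici.mpr ht) ht
  rw [h0] at this
  simp only [hf] at this
  linarith

private lemma g_nonneg : ∀ t : ℝ, 0 < t →
    0 ≤ (t + 2) * (t * Real.log t - t + 1) - 3/2 * (t - 1)^2 := by
  intro t ht
  set g : ℝ → ℝ := fun x => (x + 2) * (x * Real.log x - x + 1) - 3/2 * (x - 1)^2 with hgdef
  have hderiv : ∀ x : ℝ, 0 < x →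
      HasDerivAt g (2 * ((x + 1) * Real.log x - 2 * (x - 1))) x := by
    intro x hx
    have h1 : HasDerivAt (fun y : ℝ => y * Real.log y - y + 1)
        (Real.log x + 1 - 1) x :=
      ((Real.hasDerivAt_mul_log hx.ne').sub (hasDerivAt_id x)).add_const 1
    have h2 : HasDerivAt (fun y : ℝ => (y + 2) * (y * Real.log y - y + 1))
        (1 * (x * Real.log x - x + 1) + (x + 2) * (Real.log x + 1 - 1)) x :=
      ((hasDerivAt_id x).add_const 2).mul h1
    have h3 : HasDerivAt (fun y : ℝ => 3/2 * (y - 1)^2)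
        (3/2 * ((2:ℕ) * (x - 1)^(2-1) * 1)) x :=
      (((hasDerivAt_id x).sub_const 1).pow 2).const_mul (3/2)
    have := h2.fun_sub h3
    exact this.congr_deriv (by push_cast; ring)
  have hg1 : g 1 = 0 := by simp [hgdef]
  rcases le_or_gt 1 t with h1t | ht1
  · -- t ≥ 1 : monotone on Ici 1
    have hmono : MonotoneOn g (Set.Ici 1) := by
      apply monotoneOn_of_deriv_nonneg (convex_Ici 1)
      · intro x hx
        exact (hderiv x (lt_of_lt_of_le one_pos hx)).continuousAt.continuousWithinAt
      · intro x hx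
        rw [interior_Ici] at hx
        exact (hderiv x (lt_trans one_pos hx)).differentiableAt.differentiableWithinAt
      · intro x hx
        rw [interior_Ici] at hx
        have hx0 : (0:ℝ) < x := lt_trans one_pos hx
        rw [(hderiv x hx0).deriv]
        have := key1 x hx.le
        linarith
    have := hmono (Set.mem_Ici.mpr le_rfl) (Set.mem_Ici.mpr h1t) h1t
    rw [hg1] at this
    simpa [hgdef] using this
  · -- 0 < t < 1 : antitone on Ioc 0 1
    have hanti : AntitoneOn g (Set.Ioc 0 1) := by
      apply antitoneOn_of_deriv_nonpos (convex_Ioc 0 1)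
      · intro x hx
        exact (hderiv x hx.1).continuousAt.continuousWithinAt
      · intro x hx
        rw [interior_Ioc] at hx
        exact (hderiv x hx.1).differentiableAt.differentiableWithinAt
      · intro x hx
        rw [interior_Ioc] at hx
        obtain ⟨hx0, hx1⟩ := hx
        rw [(hderiv x hx0).deriv]
        -- (x+1) log x ≤ 2(x-1) for 0 < x < 1, from key1 at 1/x
        have hinv : (1:ℝ) ≤ 1/x := by
          rw [le_div_iff₀ hx0]; linarith
        have := key1 (1/x) hinv
        rw [Real.log_div one_ne_zero hx0.ne', Real.log_one] at this
        -- 2*(1/x - 1) ≤ (1/x + 1) * (0 - log x)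
        have hx0' : (0:ℝ) < x := hx0
        have h' : 2 * (1 - x) ≤ (1 + x) * (-Real.log x) := by
          have hm := mul_le_mul_of_nonneg_left this hx0.le
          calc 2 * (1 - x) = x * (2 * (1/x - 1)) := by
                field_simp
            _ ≤ x * ((1/x + 1) * (0 - Real.log x)) := hm
            _ = (1 + x) * (-Real.log x) := by
                field_simp
                ring
        nlinarith
    have := hanti (Set.mem_Ioc.mpr ⟨ht, ht1.le⟩) (Set.mem_Ioc.mpr ⟨one_pos, le_rfl⟩) ht1.le
    rw [hg1] at this
    simpa [hgdef] using this

private lemma keyL (x y : ℝ) (hx : 0 ≤ x) (hy : 0 < y) :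
    3 * (x - y)^2 ≤ (x * Real.log x - x * Real.log y - x + y) * (2 * (x + 2*y)) := by
  rcases hx.eq_or_lt with rfl | hx0
  · simp only [Real.log_zero, mul_zero, zero_mul, sub_zero, zero_sub, neg_add_cancel,
      zero_add, zero_mul, zero_sub]
    nlinarith [sq_nonneg y, hy]
  · have ht : 0 < x / y := div_pos hx0 hy
    have hg := g_nonneg (x/y) ht
    rw [Real.log_div hx0.ne' hy.ne'] at hg
    have hy2 : (0:ℝ) < y^2 := by positivity
    have h2 : 0 ≤ ((x/y + 2) * ((x/y) * (Real.log x - Real.log y) - x/y + 1)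
        - 3/2 * (x/y - 1)^2) * y^2 := mul_nonneg hg hy2.le
    have heq : ((x/y + 2) * ((x/y) * (Real.log x - Real.log y) - x/y + 1)
        - 3/2 * (x/y - 1)^2) * y^2
        = (x * Real.log x - x * Real.log y - x + y) * (x + 2*y) - 3/2 * (x - y)^2 := by
      field_simp
    rw [heq] at h2
    linarith

theorem stmt2 (a b : ℝ) (ha : 0 ≤ a) (hb : 0 ≤ b) (hab : 0 < a + b) :
    (phiEnt a + phiEnt b) / 2 - phiEnt ((a + b) / 2) ≥ (1 / 4) * (a - b) ^ 2 / (a + b) := by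
  have hm : (0:ℝ) < (a + b) / 2 := by linarith
  have h1 := keyL a ((a+b)/2) ha hm
  have h2 := keyL b ((a+b)/2) hb hm
  unfold phiEnt
  rw [ge_iff_le, div_le_iff₀ hab]
  set La := Real.log a
  set Lb := Real.log b
  set Lm := Real.log ((a+b)/2)
  have hbs : (0:ℝ) ≤ b + (a + b) := by linarith
  have has : (0:ℝ) ≤ a + (a + b) := by linarith
  have h1' := mul_le_mul_of_nonneg_left (mul_le_mul_of_nonneg_right h1 hbs) hab.le
  have h2' := mul_le_mul_of_nonneg_left (mul_le_mul_of_nonneg_right h2 has) hab.le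
  have hP : (0:ℝ) < a*b + 2*(a+b)^2 := by nlinarith [mul_nonneg ha hb]
  have hkey : 0 ≤ (4 * (((a * La + b * Lb) / 2 - (a + b) / 2 * Lm) * (a + b))
      - (a - b)^2) * (a*b + 2*(a+b)^2) := by
    nlinarith [h1', h2', sq_nonneg ((a - b)^2)]
  have := (mul_nonneg_iff_of_pos_right hP).mp hkey
  linarith
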